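/- Let f(x) = -(4/3)x + Ω(1/x, 0) + 2·Ω(1/x, 1/(2x)) for x > 0, where Ω(x,y) = ∑_{n∈ℤ} max(0, 1 - |n·x - y|)². Then f achieves a unique global minimum at x = Λ, the unique root of 2X³ - 6X + 3 lying in the interval (1/2, 1), and the minimum value f(Λ) = (4/3)Λ² - 2Λ + 1 is a root of the polynomial 3X³ - 33X² + 33X - 7. -/

import Mathlib

set_option maxHeartbeats 1000000

/-- `Ω(x,y) = ∑_{n∈ℤ} max(0, 1 - |n·x - y|)²`. -/
noncomputable def Omega (x y : ℝ) : ℝ := ∑' n : ℤ, (max 0 (1 - |(n : ℝ) * x - y|)) ^ 2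

/-- `f(x) = -(4/3)x + Ω(1/x, 0) + 2·Ω(1/x, 1/(2x))` for `x > 0`. -/
noncomputable def f (x : ℝ) : ℝ :=
  -(4 / 3) * x + Omega (1 / x) 0 + 2 * Omega (1 / x) (1 / (2 * x))

open Finset


/-- Summability of the Omega summand. -/
lemma omega_summable (u y : ℝ) (hu : 0 < u) :
    Summable (fun n : ℤ => (max 0 (1 - |(n : ℝ) * u - y|)) ^ 2) := by
  set M : ℕ := ⌈(1 + |y|) / u⌉₊ with hM
  apply summable_of_ne_finset_zero (s := Finset.Icc (-(M : ℤ)) (M : ℤ))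
  intro n hn
  simp only [Finset.mem_Icc, not_and_or, not_le] at hn
  have hMu : (1 + |y|) ≤ (M : ℝ) * u := by
    rw [← div_le_iff₀ hu]
    exact Nat.le_ceil _
  have habs : (M : ℝ) + 1 ≤ |(n : ℝ)| := by
    rcases hn with h | h
    · have : (n : ℝ) ≤ -((M : ℝ) + 1) := by exact_mod_cast (by omega : (n : ℤ) ≤ -((M : ℤ) + 1))
      rw [abs_of_nonpos (by linarith)]; linarith
    · have : ((M : ℝ) + 1) ≤ (n : ℝ) := by exact_mod_cast (by omega : ((M : ℤ) + 1) ≤ n)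
      rw [abs_of_nonneg (by linarith)]; linarith
  have h1 : 1 ≤ |(n : ℝ) * u - y| := by
    have h2 : |(n : ℝ)| * u - |y| ≤ |(n : ℝ) * u - y| := by
      have := abs_sub_abs_le_abs_sub ((n : ℝ) * u) y
      rw [abs_mul, abs_of_pos hu] at this
      linarith
    nlinarith [abs_nonneg y]
  have : max 0 (1 - |(n : ℝ) * u - y|) = 0 := max_eq_left (by linarith)
  rw [this]; ring

/-- One step of the telescoping estimate. -/
lemma step_ineq (u t : ℝ) (hu : 0 < u) :
    (max 0 (1-t))^3/3 + u/2*(max 0 (1-t))^2 ≤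
      (max 0 (1-(t+u)))^3/3 + u/2*(max 0 (1-(t+u)))^2 + u*(max 0 (1-t))^2 := by
  rcases le_or_gt (1-t) 0 with h | h
  · rw [max_eq_left h, max_eq_left (by linarith)]; norm_num
  · rw [max_eq_right h.le]
    rcases le_or_gt (1-(t+u)) 0 with h2 | h2
    · rw [max_eq_left h2]; nlinarith
    · rw [max_eq_right h2.le]; nlinarith [sq_nonneg (1-t), pow_pos hu 3]

lemma chain0 (u c : ℝ) (hu : 0 < u) : ∀ N : ℕ,
    (max 0 (1-c*u))^3/3 + u/2*(max 0 (1-c*u))^2 ≤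
      (max 0 (1-((N:ℝ)+c)*u))^3/3 + u/2*(max 0 (1-((N:ℝ)+c)*u))^2
        + u * ∑ k ∈ Finset.range N, (max 0 (1-((k:ℝ)+c)*u))^2 := by
  intro N
  induction N with
  | zero => simp
  | succ N ih =>
      rw [Finset.sum_range_succ]
      have hst := step_ineq u (((N:ℝ)+c)*u) hu
      push_cast
      have he2 : ((N:ℝ)+1+c)*u = ((N:ℝ)+c)*u + u := by ring
      rw [he2]
      nlinarith [ih, hst]

lemma chain' (u c : ℝ) (hu : 0 < u) (N : ℕ) (hN : 1 ≤ ((N:ℝ)+c)*u) :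
    (max 0 (1-c*u))^3/3 + u/2*(max 0 (1-c*u))^2 ≤
      u * ∑ k ∈ Finset.range N, (max 0 (1-((k:ℝ)+c)*u))^2 := by
  have h := chain0 u c hu N
  have h0 : max 0 (1-((N:ℝ)+c)*u) = 0 := max_eq_left (by linarith)
  rw [h0] at h
  simpa using h


lemma omega_zero_eq (u : ℝ) (hu : 1 ≤ u) : Omega u 0 = 1 := by
  rw [Omega, tsum_eq_single 0]
  · norm_num
  · intro n hn
    have h1 : (1:ℝ) ≤ |(n : ℝ)| := by
      rcases lt_or_gt_of_ne hn with h | h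
      · have : (n:ℝ) ≤ -1 := by exact_mod_cast (by omega : n ≤ -1)
        rw [abs_of_nonpos (by linarith)]; linarith
      · have : (1:ℝ) ≤ (n:ℝ) := by exact_mod_cast (by omega : 1 ≤ n)
        rw [abs_of_nonneg (by linarith)]; linarith
    have : max 0 (1 - |(n : ℝ) * u - 0|) = 0 := by
      apply max_eq_left
      rw [sub_zero, abs_mul, abs_of_pos (by linarith : (0:ℝ) < u)]
      nlinarith
    rw [this]; ring

lemma omega_half_abs (u : ℝ) (hu : 0 < u) (n : ℤ) :
    |(n : ℝ) * u - u/2| = |(n:ℝ) - 1/2| * u := by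
  rw [show (n : ℝ) * u - u/2 = ((n:ℝ) - 1/2) * u by ring, abs_mul, abs_of_pos hu]

lemma omega_half_eq_zero (u : ℝ) (hu : 2 ≤ u) : Omega u (u/2) = 0 := by
  rw [Omega]
  have h : ∀ n : ℤ, (max 0 (1 - |(n : ℝ) * u - u/2|)) ^ 2 = 0 := by
    intro n
    have habs : (1/2 : ℝ) ≤ |(n:ℝ) - 1/2| := by
      rcases le_or_gt n 0 with h | h
      · have : (n:ℝ) ≤ 0 := by exact_mod_cast h
        rw [abs_of_nonpos (by linarith)]; linarith
      · have : (1:ℝ) ≤ (n:ℝ) := by exact_mod_cast h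
        rw [abs_of_nonneg (by linarith)]; linarith
    have : max 0 (1 - |(n : ℝ) * u - u/2|) = 0 := by
      apply max_eq_left
      rw [omega_half_abs u (by linarith) n]
      nlinarith
    rw [this]; ring
  rw [tsum_congr h, tsum_zero]

lemma omega_half_eq (u : ℝ) (hu1 : 1 ≤ u) (hu2 : u ≤ 2) :
    Omega u (u/2) = 2 * (1 - u/2)^2 := by
  have hu : (0:ℝ) < u := by linarith
  rw [Omega, tsum_eq_sum (s := ({0, 1} : Finset ℤ))]
  · rw [Finset.sum_pair (by norm_num : (0:ℤ) ≠ 1)]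
    have h0 : |((0:ℤ) : ℝ) * u - u/2| = u/2 := by
      rw [omega_half_abs u hu]; push_cast
      rw [abs_of_nonpos (by norm_num)]; ring
    have h1 : |((1:ℤ) : ℝ) * u - u/2| = u/2 := by
      rw [omega_half_abs u hu]; push_cast
      rw [abs_of_nonneg (by norm_num)]; ring
    rw [h0, h1, max_eq_right (by linarith)]
    ring
  · intro n hn
    simp only [Finset.mem_insert, Finset.mem_singleton, not_or] at hn
    have habs : (3/2 : ℝ) ≤ |(n:ℝ) - 1/2| := by
      rcases le_or_gt n 0 with h | h
      · have hn1 : n ≤ -1 := by omega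
        have : (n:ℝ) ≤ -1 := by exact_mod_cast hn1
        rw [abs_of_nonpos (by linarith)]; linarith
      · have hn2 : (2:ℤ) ≤ n := by omega
        have : (2:ℝ) ≤ (n:ℝ) := by exact_mod_cast hn2
        rw [abs_of_nonneg (by linarith)]; linarith
    have : max 0 (1 - |(n : ℝ) * u - u/2|) = 0 := by
      apply max_eq_left
      rw [omega_half_abs u hu]
      nlinarith
    rw [this]; ring

lemma lbA (u : ℝ) (hu : 0 < u) (hu1 : u ≤ 1) :
    u + 2*((1-u)^3/3 + u/2*(1-u)^2) ≤ u * Omega u 0 := by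
  set g : ℤ → ℝ := fun n => (max 0 (1 - |(n : ℝ) * u - 0|)) ^ 2 with hg
  have hsum : Summable g := omega_summable u 0 hu
  have hnat : Summable (fun n : ℕ => g n) :=
    hsum.comp_injective (fun a b h => by exact_mod_cast h)
  have hneg : Summable (fun n : ℕ => g (-((n:ℤ)+1))) :=
    hsum.comp_injective (fun a b h => by omega)
  have hsplit : Omega u 0 = (∑' n : ℕ, g n) + ∑' n : ℕ, g (-((n:ℤ)+1)) :=
    (tsum_of_nat_of_neg_add_one hnat hneg).symm ▸ rfl
  set N : ℕ := ⌈1/u⌉₊ with hN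
  have hNu : 1 ≤ (N:ℝ)*u := by
    rw [← div_le_iff₀ hu]
    exact Nat.le_ceil _
  have hgnat : ∀ n : ℕ, g n = (max 0 (1 - (n:ℝ)*u))^2 := by
    intro n
    simp only [hg, sub_zero]
    rw [abs_mul, abs_of_pos hu, abs_of_nonneg (by positivity : (0:ℝ) ≤ ((n:ℤ):ℝ))]
    norm_num
  have hgneg : ∀ n : ℕ, g (-((n:ℤ)+1)) = (max 0 (1 - ((n:ℝ)+1)*u))^2 := by
    intro n
    simp only [hg, sub_zero]
    rw [show ((-((n:ℤ)+1) : ℤ):ℝ) = -((n:ℝ)+1) by push_cast; ring]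
    rw [show (-((n:ℝ)+1)) * u = -(((n:ℝ)+1)*u) by ring, abs_neg,
      abs_of_nonneg (by positivity)]
  -- nat side
  have h1 : ∑ n ∈ range (N+1), g n ≤ ∑' n : ℕ, g n :=
    Summable.sum_le_tsum _ (fun n _ => by simp only [hg]; positivity) hnat
  have h2 : ∑ n ∈ range (N+1), g n = 1 + ∑ k ∈ range N, (max 0 (1 - ((k:ℝ)+1)*u))^2 := by
    rw [Finset.sum_range_succ']
    have e0 : g ((0:ℕ):ℤ) = 1 := by rw [hgnat 0]; norm_num
    have hgnat1 : ∀ k : ℕ, g ((k+1:ℕ):ℤ) = (max 0 (1 - ((k:ℝ)+1)*u))^2 := by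
      intro k
      rw [hgnat (k+1)]
      push_cast
      try ring_nf
    rw [e0, Finset.sum_congr rfl (fun k _ => hgnat1 k)]
    ring
  have hch1 := chain' u 1 hu N (by linarith)
  -- neg side
  have h3 : ∑ n ∈ range N, g (-((n:ℤ)+1)) ≤ ∑' n : ℕ, g (-((n:ℤ)+1)) :=
    Summable.sum_le_tsum _ (fun n _ => by simp only [hg]; positivity) hneg
  have h4 : ∑ n ∈ range N, g (-((n:ℤ)+1)) = ∑ k ∈ range N, (max 0 (1 - ((k:ℝ)+1)*u))^2 :=
    Finset.sum_congr rfl (fun k _ => hgneg k)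
  have hmax : max 0 (1-1*u) = 1-u := by rw [max_eq_right (by linarith)]; ring
  rw [hmax] at hch1
  have hOm : 1 + ∑ k ∈ range N, (max 0 (1 - ((k:ℝ)+1)*u))^2
      + ∑ k ∈ range N, (max 0 (1 - ((k:ℝ)+1)*u))^2 ≤ Omega u 0 := by
    rw [hsplit]
    have := h2 ▸ h1
    have := h4 ▸ h3
    linarith
  have := mul_le_mul_of_nonneg_left hOm hu.le
  nlinarith [hch1]

lemma lbB (u : ℝ) (hu : 0 < u) (hu1 : u ≤ 1) :
    u*(1-u/2)^2 + ((1-u/2)^3/3 + u/2*(1-u/2)^2)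
      + ((max 0 (1-3*u/2))^3/3 + u/2*(max 0 (1-3*u/2))^2) ≤ u * Omega u (u/2) := by
  set g : ℤ → ℝ := fun n => (max 0 (1 - |(n : ℝ) * u - u/2|)) ^ 2 with hg
  have hsum : Summable g := omega_summable u (u/2) hu
  have hnat : Summable (fun n : ℕ => g n) :=
    hsum.comp_injective (fun a b h => by exact_mod_cast h)
  have hneg : Summable (fun n : ℕ => g (-((n:ℤ)+1))) :=
    hsum.comp_injective (fun a b h => by omega)
  have hsplit : Omega u (u/2) = (∑' n : ℕ, g n) + ∑' n : ℕ, g (-((n:ℤ)+1)) :=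
    (tsum_of_nat_of_neg_add_one hnat hneg).symm ▸ rfl
  set N : ℕ := ⌈1/u⌉₊ with hN
  have hNu : 1 ≤ (N:ℝ)*u := by
    rw [← div_le_iff₀ hu]
    exact Nat.le_ceil _
  have hg0 : g ((0:ℕ):ℤ) = (1-u/2)^2 := by
    simp only [hg]
    rw [show (((0:ℕ):ℤ):ℝ) * u - u/2 = -(u/2) by push_cast; ring, abs_neg,
      abs_of_nonneg (by positivity), max_eq_right (by linarith)]
  have hgnat : ∀ k : ℕ, g ((k+1:ℕ):ℤ) = (max 0 (1 - ((k:ℝ)+1/2)*u))^2 := by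
    intro k
    simp only [hg]
    rw [show (((k+1:ℕ):ℤ):ℝ) * u - u/2 = ((k:ℝ)+1/2)*u by push_cast; ring,
      abs_of_nonneg (by positivity)]
  have hgneg : ∀ n : ℕ, g (-((n:ℤ)+1)) = (max 0 (1 - ((n:ℝ)+3/2)*u))^2 := by
    intro n
    simp only [hg]
    rw [show ((-((n:ℤ)+1) : ℤ):ℝ) * u - u/2 = -(((n:ℝ)+3/2)*u) by push_cast; ring, abs_neg,
      abs_of_nonneg (by positivity)]
  have h1 : ∑ n ∈ range (N+1), g n ≤ ∑' n : ℕ, g n :=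
    Summable.sum_le_tsum _ (fun n _ => by simp only [hg]; positivity) hnat
  have h2 : ∑ n ∈ range (N+1), g n
      = (1-u/2)^2 + ∑ k ∈ range N, (max 0 (1 - ((k:ℝ)+1/2)*u))^2 := by
    rw [Finset.sum_range_succ', hg0]
    rw [Finset.sum_congr rfl (fun k _ => hgnat k)]
    ring
  have hch1 := chain' u (1/2) hu N (by nlinarith)
  have hch2 := chain' u (3/2) hu N (by nlinarith)
  have h3 : ∑ n ∈ range N, g (-((n:ℤ)+1)) ≤ ∑' n : ℕ, g (-((n:ℤ)+1)) :=
    Summable.sum_le_tsum _ (fun n _ => by simp only [hg]; positivity) hneg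
  have h4 : ∑ n ∈ range N, g (-((n:ℤ)+1)) = ∑ k ∈ range N, (max 0 (1 - ((k:ℝ)+3/2)*u))^2 :=
    Finset.sum_congr rfl (fun k _ => hgneg k)
  have hmax1 : max 0 (1-(1/2)*u) = 1-u/2 := by rw [max_eq_right (by linarith)]; ring
  have hmax2 : max 0 (1-(3/2)*u) = max 0 (1-3*u/2) := by ring_nf
  rw [hmax1] at hch1
  rw [hmax2] at hch2
  have hOm : (1-u/2)^2 + ∑ k ∈ range N, (max 0 (1 - ((k:ℝ)+1/2)*u))^2
      + ∑ k ∈ range N, (max 0 (1 - ((k:ℝ)+3/2)*u))^2 ≤ Omega u (u/2) := by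
    rw [hsplit]
    have := h2 ▸ h1
    have := h4 ▸ h3
    linarith
  have := mul_le_mul_of_nonneg_left hOm hu.le
  nlinarith [hch1, hch2]

/-- value of f on (1/2, 1]. -/
lemma f_mid (x : ℝ) (h1 : 1/2 < x) (h2 : x ≤ 1) :
    f x = -(4/3)*x + 1 + 4*(1 - 1/(2*x))^2 := by
  have hx : (0:ℝ) < x := by linarith
  have hu1 : (1:ℝ) ≤ 1/x := by rw [le_div_iff₀ hx]; linarith
  have hu2 : (1:ℝ)/x ≤ 2 := by rw [div_le_iff₀ hx]; linarith
  rw [f, show (1:ℝ)/(2*x) = (1/x)/2 by ring, omega_zero_eq _ hu1, omega_half_eq _ hu1 hu2]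
  have : (1:ℝ) - (1/x)/2 = 1 - 1/(2*x) := by ring
  rw [this]; ring

/-- `f` achieves a unique global minimum (over `x > 0`) at `x = Λ`, the unique root of
`2X³ - 6X + 3` in `(1/2, 1)`, and the minimum value `f(Λ) = (4/3)Λ² - 2Λ + 1` is a root
of `3X³ - 33X² + 33X - 7`. -/
theorem stmt_10 (Λ : ℝ) (hΛroot : 2 * Λ ^ 3 - 6 * Λ + 3 = 0)
    (hΛ1 : 1 / 2 < Λ) (hΛ2 : Λ < 1)
    (huniq : ∀ y : ℝ, 1 / 2 < y → y < 1 → 2 * y ^ 3 - 6 * y + 3 = 0 → y = Λ) :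
    (∀ x : ℝ, 0 < x → x ≠ Λ → f Λ < f x) ∧
    f Λ = 4 / 3 * Λ ^ 2 - 2 * Λ + 1 ∧
    3 * (f Λ) ^ 3 - 33 * (f Λ) ^ 2 + 33 * (f Λ) - 7 = 0 := by
  have hΛ0 : (0:ℝ) < Λ := by linarith
  have hΛ34 : Λ < 3/4 := by
    nlinarith [mul_pos (mul_pos hΛ0 (by linarith : (0:ℝ) < 1 - Λ)) (by linarith : (0:ℝ) < 1 + Λ)]
  have hfΛ : f Λ = 4 / 3 * Λ ^ 2 - 2 * Λ + 1 := by
    rw [f_mid Λ hΛ1 hΛ2.le]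
    have hΛne : Λ ≠ 0 := ne_of_gt hΛ0
    field_simp
    linear_combination (-4)*(2*Λ - 1) * hΛroot
  have hlt13 : f Λ < 1/3 := by rw [hfΛ]; nlinarith
  refine ⟨?_, hfΛ, ?_⟩
  · intro x hx hne
    rcases le_or_gt x (1/2) with hx2 | hx2
    · have hu : (2:ℝ) ≤ 1/x := by rw [le_div_iff₀ hx]; linarith
      have hfx : f x = -(4/3)*x + 1 := by
        rw [f, show (1:ℝ)/(2*x) = (1/x)/2 by ring, omega_zero_eq _ (by linarith),
          omega_half_eq_zero _ hu]
        ring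
      rw [hfx]; linarith
    · rcases le_or_gt x 1 with hx1 | hx1
      · rw [f_mid x hx2 hx1, f_mid Λ hΛ1 hΛ2.le]
        have hxne : x ≠ 0 := ne_of_gt hx
        have hΛne : Λ ≠ 0 := ne_of_gt hΛ0
        have hkey : (-(4/3)*x + 1 + 4*(1 - 1/(2*x))^2) - (-(4/3)*Λ + 1 + 4*(1 - 1/(2*Λ))^2)
            = (x-Λ)^2*(3-4*Λ^2*x)/(3*x^2*Λ^2) := by
          field_simp
          linear_combination (8*x*(Λ-x)) * hΛroot
        have hpos : 0 < (x-Λ)^2*(3-4*Λ^2*x)/(3*x^2*Λ^2) := by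
          apply div_pos
          · apply mul_pos
            · rcases (sub_ne_zero.mpr hne).lt_or_gt with h | h
              · nlinarith
              · nlinarith
            · nlinarith
          · positivity
        linarith
      · -- x > 1
        set u : ℝ := 1/x with hudef
        have hu : (0:ℝ) < u := by positivity
        have hu1 : u < 1 := by rw [hudef, div_lt_one hx]; exact hx1
        have hux : u * x = 1 := by rw [hudef]; field_simp
        have hA := lbA u hu hu1.le
        have hB := lbB u hu hu1.le
        have hfx : f x = -(4/3)*x + Omega u 0 + 2 * Omega u (u/2) := by
          rw [f, show (1:ℝ)/(2*x) = u/2 by rw [hudef]; ring]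
        have h13 : u * (1/3) ≤ u * f x := by
          rw [hfx]
          have e : u * (-(4/3)*x + Omega u 0 + 2 * Omega u (u/2))
              = -(4/3)*(u*x) + u * Omega u 0 + 2*(u * Omega u (u/2)) := by ring
          rw [e, hux]
          rcases le_or_gt u (2/3) with hc | hc
          · rw [max_eq_right (by linarith : (0:ℝ) ≤ 1-3*u/2)] at hB
            have hcert : (0:ℝ) ≤ (2/3 - u) * u * (1 - u) :=
              mul_nonneg (mul_nonneg (by linarith) hu.le) (by linarith)
            nlinarith [hA, hB, hcert, sq_nonneg (4*u - 3)]
          · rw [max_eq_left (by linarith : 1-3*u/2 ≤ (0:ℝ))] at hB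
            have hcert : (0:ℝ) < u * ((u - 5/4)^2 + 5/48) :=
              mul_pos hu (by positivity)
            nlinarith [hA, hB, hcert]
        have : (1:ℝ)/3 ≤ f x := le_of_mul_le_mul_left h13 hu
        linarith
  · rw [hfΛ]
    linear_combination (32/9*Λ^3 - 16*Λ^2 + 40/3*Λ - 4/3) * hΛroot
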